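/- Let g:[0,1]→(0,∞) be a nonincreasing function, and let U be a random variable with P(U ≤ u) ≤ u for all u ∈ [0,1]. Then for any constant c > 0, E[ 1{U ≤ c·g(U)} / g(U) ] ≤ c. -/

import Mathlib

open MeasureTheory
open scoped Classical

/-- Blanchard–Roquain Lemma 3.2: if `g : [0,1] → (0,∞)` is nonincreasing and `U` is a
superuniform random variable with values in `[0,1]`, then for any `c > 0`,
`E[ 1{U ≤ c·g(U)} / g(U) ] ≤ c`. -/
theorem blanchard_roquain_lemma
    {Ω : Type*} [MeasurableSpace Ω] (μ : Measure Ω) [IsProbabilityMeasure μ]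
    (U : Ω → ℝ) (hUmeas : Measurable U) (hUrange : ∀ ω, U ω ∈ Set.Icc (0:ℝ) 1)
    (hUsuper : ∀ u ∈ Set.Icc (0:ℝ) 1, μ {ω | U ω ≤ u} ≤ ENNReal.ofReal u)
    (g : ℝ → ℝ) (hg_pos : ∀ u ∈ Set.Icc (0:ℝ) 1, 0 < g u)
    (hg_anti : AntitoneOn g (Set.Icc (0:ℝ) 1))
    (c : ℝ) (hc : 0 < c) :
    ∫ ω, (if U ω ≤ c * g (U ω) then (g (U ω))⁻¹ else 0) ∂μ ≤ c := by
  classical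
  set f : Ω → ℝ := fun ω => if U ω ≤ c * g (U ω) then (g (U ω))⁻¹ else 0 with hf
  set S : Set ℝ := {u | u ∈ Set.Icc (0:ℝ) 1 ∧ u ≤ c * g u} with hS
  have h0S : (0:ℝ) ∈ S := ⟨⟨le_refl 0, zero_le_one⟩,
    le_of_lt (mul_pos hc (hg_pos 0 ⟨le_refl 0, zero_le_one⟩))⟩
  have hbdd : BddAbove S := ⟨1, fun u hu => hu.1.2⟩
  set u₀ : ℝ := sSup S with hu₀
  have hu₀0 : 0 ≤ u₀ := le_csSup hbdd h0S
  have hu₀1 : u₀ ≤ 1 := csSup_le ⟨0, h0S⟩ (fun u hu => hu.1.2)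
  have hUS : ∀ ω, U ω ≤ c * g (U ω) → U ω ≤ u₀ :=
    fun ω h => le_csSup hbdd ⟨hUrange ω, h⟩
  -- measurability
  have hproj : ∀ ω, max 0 (min 1 (U ω)) = U ω := by
    intro ω
    obtain ⟨h1, h2⟩ := hUrange ω
    rw [min_eq_right h2, max_eq_right h1]
  have hanti : Antitone (fun u : ℝ => g (max 0 (min 1 u))) := by
    intro a b hab
    have hmem : ∀ u : ℝ, max 0 (min 1 u) ∈ Set.Icc (0:ℝ) 1 := by
      intro u
      exact ⟨le_max_left _ _, max_le zero_le_one (min_le_left _ _)⟩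
    exact hg_anti (hmem a) (hmem b) (max_le_max (le_refl 0) (min_le_min (le_refl 1) hab))
  have hh : Measurable (fun u : ℝ => g (max 0 (min 1 u))) := hanti.measurable
  have hgU : Measurable (fun ω => g (U ω)) := by
    have : (fun ω => g (U ω)) = (fun u : ℝ => g (max 0 (min 1 u))) ∘ U := by
      funext ω; simp [hproj ω]
    rw [this]; exact hh.comp hUmeas
  have hmeas : Measurable f := by
    apply Measurable.ite _ hgU.inv measurable_const
    exact measurableSet_le hUmeas (measurable_const.mul hgU)
  have hf_nonneg : ∀ ω, 0 ≤ f ω := by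
    intro ω
    by_cases hev : U ω ≤ c * g (U ω)
    · simp only [hf, if_pos hev]
      exact inv_nonneg.mpr (hg_pos (U ω) (hUrange ω)).le
    · simp only [hf, if_neg hev]; exact le_refl 0
  rcases eq_or_lt_of_le hu₀0 with hzero | hpos
  · -- u₀ = 0 : event is null
    have hnull : μ {ω | U ω ≤ 0} = 0 := by
      have := hUsuper 0 ⟨le_refl 0, zero_le_one⟩
      simpa using this
    have hae : f =ᵐ[μ] (fun _ => (0:ℝ)) := by
      have : ∀ᵐ ω ∂μ, ¬ (U ω ≤ 0) := by
        rw [ae_iff]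
        simpa using hnull
      filter_upwards [this] with ω hω
      have hev : ¬ (U ω ≤ c * g (U ω)) := by
        intro h
        exact hω (le_of_le_of_eq (hUS ω h) hzero.symm)
      simp [hf, if_neg hev]
    calc ∫ ω, f ω ∂μ = ∫ ω, (0:ℝ) ∂μ := integral_congr_ae hae
      _ = 0 := integral_zero _ _
      _ ≤ c := hc.le
  · -- u₀ > 0
    set I : ℝ := ∫ ω, f ω ∂μ with hI
    have hkey : ∀ v ∈ S, v * I ≤ c * u₀ := by
      intro v hv
      rcases eq_or_lt_of_le hv.1.1 with hv0 | hv0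
      · rw [← hv0, zero_mul]
        exact mul_nonneg hc.le hu₀0
      · -- v > 0
        have hvc : 0 < v / c := div_pos hv0 hc
        have hgb : ∀ ω, U ω ≤ c * g (U ω) → v / c ≤ g (U ω) := by
          intro ω hev
          by_cases hle : U ω ≤ v
          · have h1 : g v ≤ g (U ω) := hg_anti (hUrange ω) hv.1 hle
            have h2 : v / c ≤ g v := (div_le_iff₀' hc).mpr hv.2
            linarith
          · push_neg at hle
            have h2 : U ω / c ≤ g (U ω) := (div_le_iff₀' hc).mpr hev
            have : v / c ≤ U ω / c := by gcongr
            linarith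
        have hbound : ∀ ω, f ω ≤ Set.indicator {ω' | U ω' ≤ u₀} (fun _ => c / v) ω := by
          intro ω
          by_cases hev : U ω ≤ c * g (U ω)
          · have hmem : ω ∈ {ω' | U ω' ≤ u₀} := hUS ω hev
            rw [Set.indicator_of_mem hmem]
            simp only [hf, if_pos hev]
            have h1 : v / c ≤ g (U ω) := hgb ω hev
            have h2 : (g (U ω))⁻¹ ≤ (v / c)⁻¹ := by
              apply inv_anti₀ hvc h1
            rw [inv_div] at h2
            exact h2
          · simp only [hf, if_neg hev]
            exact Set.indicator_nonneg (fun _ _ => (div_pos hc hv0).le) ω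
        have hs : MeasurableSet {ω' | U ω' ≤ u₀} := measurableSet_le hUmeas measurable_const
        have hind_int : Integrable (Set.indicator {ω' | U ω' ≤ u₀} (fun _ => c / v)) μ :=
          (integrable_const (c / v)).indicator hs
        have hf_int : Integrable f μ := by
          apply hind_int.mono' hmeas.aestronglyMeasurable
          filter_upwards with ω
          rw [Real.norm_eq_abs, abs_of_nonneg (hf_nonneg ω)]
          exact hbound ω
        have hInt_le : I ≤ (μ {ω' | U ω' ≤ u₀}).toReal * (c / v) := by
          calc I ≤ ∫ ω, Set.indicator {ω' | U ω' ≤ u₀} (fun _ => c / v) ω ∂μ :=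
                integral_mono hf_int hind_int hbound
            _ = (μ {ω' | U ω' ≤ u₀}).toReal • (c / v) := integral_indicator_const _ hs
            _ = (μ {ω' | U ω' ≤ u₀}).toReal * (c / v) := by rw [smul_eq_mul]
        have hmu : (μ {ω' | U ω' ≤ u₀}).toReal ≤ u₀ :=
          ENNReal.toReal_le_of_le_ofReal hu₀0 (hUsuper u₀ ⟨hu₀0, hu₀1⟩)
        have : I ≤ u₀ * (c / v) := le_trans hInt_le
          (mul_le_mul_of_nonneg_right hmu (div_pos hc hv0).le)
        calc v * I ≤ v * (u₀ * (c / v)) := mul_le_mul_of_nonneg_left this hv0.le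
          _ = c * u₀ := by field_simp
    have hInonneg : 0 ≤ I := integral_nonneg hf_nonneg
    rcases eq_or_lt_of_le hInonneg with hI0 | hI0
    · rw [← hI0]; exact hc.le
    · have h1 : u₀ ≤ c * u₀ / I := by
        apply csSup_le ⟨0, h0S⟩
        intro v hv
        exact (le_div_iff₀ hI0).mpr (hkey v hv)
      have h2 : u₀ * I ≤ c * u₀ := by
        rw [le_div_iff₀ hI0] at h1
        linarith
      have := (mul_le_mul_iff_right₀ hpos).mp (by linarith : u₀ * I ≤ u₀ * c)
      exact this
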